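/- (Convergence of CAGrad, summed form.) Let L : ℝⁿ → ℝ be differentiable with H-Lipschitz gradient for some H > 0, let 0 < α ≤ 1/H and c ∈ [0, 1). Let (θₜ)ₜ≥0 be a sequence in ℝⁿ and (dₜ)ₜ≥0 a sequence of directions such that θₜ₊₁ = θₜ − α dₜ and ‖∇L(θₜ) − dₜ‖ ≤ c‖∇L(θₜ)‖ for every t. Then for every T ≥ 0, ∑_{t=0}^{T} ‖∇L(θₜ)‖² ≤ 2(L(θ₀) − L(θ_{T+1})) / (α(1 − c²)). -/

import Mathlib

open RealInnerProductSpace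

lemma descent_lemma {n : ℕ} (L : EuclideanSpace ℝ (Fin n) → ℝ) (H : ℝ) (hH : 0 ≤ H)
    (hdiff : Differentiable ℝ L)
    (hlip : ∀ x y : EuclideanSpace ℝ (Fin n), ‖gradient L x - gradient L y‖ ≤ H * ‖x - y‖)
    (x v : EuclideanSpace ℝ (Fin n)) :
    L (x + v) ≤ L x + ⟪gradient L x, v⟫ + H / 2 * ‖v‖ ^ 2 := by
  set φ : ℝ → ℝ := fun t => L (x + t • v) - t * ⟪gradient L x, v⟫ - H * t ^ 2 / 2 * ‖v‖ ^ 2 with hφ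
  have hder : ∀ t : ℝ, HasDerivAt φ
      (⟪gradient L (x + t • v), v⟫ - ⟪gradient L x, v⟫ - H * t * ‖v‖ ^ 2) t := by
    intro t
    have hline : HasDerivAt (fun t : ℝ => x + t • v) v t := by
      simpa using ((hasDerivAt_id t).smul_const v).const_add x
    have h1 : HasDerivAt (fun t : ℝ => L (x + t • v)) (⟪gradient L (x + t • v), v⟫) t := by
      have := ((hdiff (x + t • v)).hasGradientAt.hasFDerivAt).comp_hasDerivAt t hline
      simpa [Function.comp_def] using this
    have h2 : HasDerivAt (fun t : ℝ => t * ⟪gradient L x, v⟫) (⟪gradient L x, v⟫) t := by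
      simpa using (hasDerivAt_id t).mul_const _
    have h3 : HasDerivAt (fun t : ℝ => H * t ^ 2 / 2 * ‖v‖ ^ 2) (H * t * ‖v‖ ^ 2) t := by
      have : HasDerivAt (fun t : ℝ => t ^ 2) (2 * t) t := by simpa using hasDerivAt_pow 2 t
      have := ((this.const_mul H).div_const 2).mul_const (‖v‖ ^ 2)
      rw [show H * t * ‖v‖ ^ 2 = H * (2 * t) / 2 * ‖v‖ ^ 2 by ring]
      exact this
    exact (h1.sub h2).sub h3
  have hmono : AntitoneOn φ (Set.Icc (0:ℝ) 1) := by
    apply antitoneOn_of_deriv_nonpos (convex_Icc 0 1)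
    · exact fun t _ => (hder t).continuousAt.continuousWithinAt
    · exact fun t _ => (hder t).differentiableAt.differentiableWithinAt
    · intro t ht
      rw [interior_Icc] at ht
      rw [(hder t).deriv]
      have key : ⟪gradient L (x + t • v), v⟫ - ⟪gradient L x, v⟫ ≤ H * t * ‖v‖ ^ 2 := by
        calc ⟪gradient L (x + t • v), v⟫ - ⟪gradient L x, v⟫
            = ⟪gradient L (x + t • v) - gradient L x, v⟫ := by
              rw [inner_sub_left]
          _ ≤ ‖gradient L (x + t • v) - gradient L x‖ * ‖v‖ := real_inner_le_norm _ _
          _ ≤ (H * ‖(x + t • v) - x‖) * ‖v‖ := by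
              gcongr; exact hlip _ _
          _ = H * t * ‖v‖ ^ 2 := by
              rw [add_sub_cancel_left, norm_smul]
              simp [abs_of_pos ht.1]; ring
      linarith
  have := hmono (Set.left_mem_Icc.2 zero_le_one) (Set.right_mem_Icc.2 zero_le_one) zero_le_one
  simp only [hφ, one_smul, zero_smul, add_zero, zero_mul, one_mul, one_pow] at this
  nlinarith [this]

/-- Convergence of CAGrad, summed form: under the per-step constraint
`‖∇L θₜ - dₜ‖ ≤ c ‖∇L θₜ‖` and update `θₜ₊₁ = θₜ - α dₜ`,
`∑_{t=0}^{T} ‖∇L θₜ‖² ≤ 2 (L θ₀ - L θ_{T+1}) / (α (1 - c²))`. -/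
theorem cagrad_convergence_sum {n : ℕ} (L : EuclideanSpace ℝ (Fin n) → ℝ) (H α c : ℝ)
    (hH : 0 < H) (hα : 0 < α) (hαH : α ≤ 1 / H) (hc0 : 0 ≤ c) (hc1 : c < 1)
    (hdiff : Differentiable ℝ L)
    (hlip : ∀ x y : EuclideanSpace ℝ (Fin n),
      ‖gradient L x - gradient L y‖ ≤ H * ‖x - y‖)
    (θ d : ℕ → EuclideanSpace ℝ (Fin n))
    (hupd : ∀ t : ℕ, θ (t + 1) = θ t - α • d t)
    (hd : ∀ t : ℕ, ‖gradient L (θ t) - d t‖ ≤ c * ‖gradient L (θ t)‖) :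
    ∀ T : ℕ, ∑ t ∈ Finset.range (T + 1), ‖gradient L (θ t)‖ ^ 2 ≤
      2 * (L (θ 0) - L (θ (T + 1))) / (α * (1 - c ^ 2)) := by
  have hαH' : H * α ≤ 1 := by
    rw [le_div_iff₀ hH] at hαH; linarith [hαH]
  have hc2 : 0 < 1 - c ^ 2 := by nlinarith
  have hstep : ∀ t : ℕ, α * (1 - c ^ 2) / 2 * ‖gradient L (θ t)‖ ^ 2 ≤ L (θ t) - L (θ (t + 1)) := by
    intro t
    set g := gradient L (θ t)
    have hdesc := descent_lemma L H hH.le hdiff hlip (θ t) (-(α • d t))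
    have hθ : θ t + -(α • d t) = θ (t + 1) := by rw [hupd t]; abel
    rw [hθ] at hdesc
    have hnorm : ‖-(α • d t)‖ ^ 2 = α ^ 2 * ‖d t‖ ^ 2 := by
      rw [norm_neg, norm_smul, mul_pow]; simp [abs_of_pos hα]
    have hinner : ⟪g, -(α • d t)⟫ = -(α * ⟪g, d t⟫) := by
      rw [inner_neg_right, real_inner_smul_right]
    rw [hnorm, hinner] at hdesc
    -- key inner product identity
    have hid : ‖g - d t‖ ^ 2 = ‖g‖ ^ 2 - 2 * ⟪g, d t⟫ + ‖d t‖ ^ 2 := by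
      rw [norm_sub_sq_real]
    have hsq : ‖g - d t‖ ^ 2 ≤ c ^ 2 * ‖g‖ ^ 2 := by
      have := hd t
      nlinarith [norm_nonneg (g - d t), norm_nonneg g]
    have hdg : ‖d t‖ ^ 2 ≤ 2 * ⟪g, d t⟫ - (1 - c ^ 2) * ‖g‖ ^ 2 := by nlinarith
    have hHα : H / 2 * (α ^ 2 * ‖d t‖ ^ 2) ≤ α / 2 * ‖d t‖ ^ 2 := by
      nlinarith [sq_nonneg (‖d t‖), mul_pos hα hα, norm_nonneg (d t)]
    nlinarith [hdesc]
  intro T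
  have hsum : ∑ t ∈ Finset.range (T + 1), α * (1 - c ^ 2) / 2 * ‖gradient L (θ t)‖ ^ 2 ≤
      L (θ 0) - L (θ (T + 1)) := by
    calc ∑ t ∈ Finset.range (T + 1), α * (1 - c ^ 2) / 2 * ‖gradient L (θ t)‖ ^ 2
        ≤ ∑ t ∈ Finset.range (T + 1), (L (θ t) - L (θ (t + 1))) :=
          Finset.sum_le_sum fun t _ => hstep t
      _ = L (θ 0) - L (θ (T + 1)) := Finset.sum_range_sub' (fun t => L (θ t)) (T + 1)
  rw [← Finset.mul_sum] at hsum
  have hpos : 0 < α * (1 - c ^ 2) := mul_pos hα hc2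
  rw [le_div_iff₀ hpos]
  nlinarith [hsum]
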